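/- If W is a symmetric (palindromic) word in two letters A and B, then for any two real symmetric positive definite matrices A and B of the same size, the matrix W(A,B) is positive definite (in particular, all its eigenvalues are positive). -/

import Mathlib

/-- Evaluate a word over `{A,B}` (encoded as `List Bool`, `false ↦ A`, `true ↦ B`)
at two matrices by taking the corresponding matrix product. -/
def wordEval {n : Type*} [Fintype n] [DecidableEq n]
    (w : List Bool) (A B : Matrix n n ℝ) : Matrix n n ℝ :=
  (w.map (fun c => if c then B else A)).prod

open Matrix in
lemma posdef_conj {n : Type*} [Fintype n] [DecidableEq n]
    {M P : Matrix n n ℝ} (hM : M.PosDef) (hP : P.PosDef) :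
    (M * P * M).PosDef := by
  have hMH : Mᴴ = M := hM.isHermitian
  rw [Matrix.posDef_iff_dotProduct_mulVec]
  constructor
  · have := Matrix.isHermitian_conjTranspose_mul_mul M hP.isHermitian
    rwa [hMH] at this
  · intro x hx
    have hMx : M *ᵥ x ≠ 0 := by
      intro h
      apply hx
      have : M⁻¹ *ᵥ (M *ᵥ x) = x := by
        rw [Matrix.mulVec_mulVec, Matrix.nonsing_inv_mul M hM.det_pos.ne'.isUnit, Matrix.one_mulVec]
      rw [← this, h, Matrix.mulVec_zero]
    have hpos := hP.dotProduct_mulVec_pos hMx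
    have hstar : star (M *ᵥ x) = Matrix.vecMul (star x) M := by
      rw [Matrix.star_mulVec, hMH]
    calc (0:ℝ) < dotProduct (star (M *ᵥ x)) (P *ᵥ (M *ᵥ x)) := hpos
      _ = dotProduct (star x) ((M * P * M) *ᵥ x) := by
          rw [hstar, ← Matrix.dotProduct_mulVec, Matrix.mulVec_mulVec,
            Matrix.mulVec_mulVec, Matrix.mul_assoc]

lemma wordEval_aux {n : Type*} [Fintype n] [DecidableEq n]
    (A B : Matrix n n ℝ) (hA : A.PosDef) (hB : B.PosDef) :
    ∀ k (w : List Bool), w.length ≤ k → w.reverse = w →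
      (wordEval w A B).PosDef := by
  intro k
  induction k with
  | zero =>
    intro w hw _
    have : w = [] := List.length_eq_zero_iff.mp (Nat.le_zero.mp hw)
    subst this
    simpa [wordEval] using (Matrix.PosDef.one : (1 : Matrix n n ℝ).PosDef)
  | succ k ih =>
    intro w hw hsym
    rcases List.eq_nil_or_concat w with rfl | ⟨s, z, rfl⟩
    · simpa [wordEval] using (Matrix.PosDef.one : (1 : Matrix n n ℝ).PosDef)
    · rw [List.concat_eq_append] at hsym hw ⊢
      cases s with
      | nil =>
        cases z
        · simpa [wordEval] using hA
        · simpa [wordEval] using hB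
      | cons x mid =>
        have hrev : z :: (mid.reverse ++ [x]) = x :: (mid ++ [z]) := by
          simpa using hsym
        have hzx : z = x := by injection hrev
        subst hzx
        have hmid : mid.reverse = mid := by
          have h2 : mid.reverse ++ [z] = mid ++ [z] := by injection hrev
          exact List.append_cancel_right h2
        have hlen : mid.length ≤ k := by
          simp at hw; omega
        have hPmid := ih mid hlen hmid
        have hM : (if z then B else A).PosDef := by cases z <;> simpa
        have heq : wordEval (z :: (mid ++ [z])) A B
            = (if z then B else A) * wordEval mid A B * (if z then B else A) := by
          simp [wordEval, List.map_append, List.prod_append, mul_assoc]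
        rw [show (z :: mid) ++ [z] = z :: (mid ++ [z]) by simp, heq]
        exact posdef_conj hM hPmid

/-- A symmetric (palindromic) word in two positive definite letters is positive definite. -/
theorem symmetric_word_posDef {n : Type*} [Fintype n] [DecidableEq n]
    (w : List Bool) (hne : w ≠ []) (hsym : w.reverse = w)
    (A B : Matrix n n ℝ) (hA : A.PosDef) (hB : B.PosDef) :
    (wordEval w A B).PosDef :=
  wordEval_aux A B hA hB w.length w le_rfl hsym
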